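/- Fix N ≥ 1. Let A_{ij} : P → ℝ and B_{jα} : Q → ℝ be smooth functions on convex open sets P, Q ⊆ ℝ^N (coordinates u and v respectively), with the matrices (A_{ij}(u)) and (B_{jα}(v)) invertible at every point, and set e_{iα}(u,v) = Σ_j A_{ij}(u)·B_{jα}(v) on P × Q. Then e satisfies the two equations (E1) ∂e_{jα}/∂uᵢ = ∂e_{iα}/∂u_j for all i,j,α, and (E2) Σ_α (e_{iα} · ∂e_{jβ}/∂v_α − e_{jα} · ∂e_{iβ}/∂v_α) = 0 for all i,j,β, if and only if (a) ∂A_{jk}/∂uᵢ = ∂A_{ik}/∂u_j for all i,j,k, and (b) the vector fields Z_j = Σ_α B_{jα} ∂/∂v_α pairwise commute, i.e. Σ_α (B_{jα} · ∂B_{kβ}/∂v_α − B_{kα} · ∂B_{jβ}/∂v_α) = 0 for all j,k,β. -/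

import Mathlib

/-- Partial derivative `∂f/∂ξᵢ` of a function of one vector variable. -/
noncomputable def pderiv' {N : ℕ} (i : Fin N) (f : (Fin N → ℝ) → ℝ) (p : Fin N → ℝ) : ℝ :=
  fderiv ℝ f p (fun l => if l = i then 1 else 0)

/-- Partial derivative `∂f/∂uᵢ` in the first factor of `ℝ^N × ℝ^N`. -/
noncomputable def dU2 {N : ℕ} (i : Fin N)
    (f : (Fin N → ℝ) × (Fin N → ℝ) → ℝ) (p : (Fin N → ℝ) × (Fin N → ℝ)) : ℝ :=
  fderiv ℝ f p ((fun l => if l = i then 1 else 0), 0)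

/-- Partial derivative `∂f/∂v_α` in the second factor of `ℝ^N × ℝ^N`. -/
noncomputable def dV2 {N : ℕ} (α : Fin N)
    (f : (Fin N → ℝ) × (Fin N → ℝ) → ℝ) (p : (Fin N → ℝ) × (Fin N → ℝ)) : ℝ :=
  fderiv ℝ f p (0, (fun l => if l = α then 1 else 0))

/-- The reducible matrix `e_{iα}(u,v) = Σⱼ A_{ij}(u) B_{jα}(v)`. -/
noncomputable def eRed {N : ℕ} (A B : Fin N → Fin N → (Fin N → ℝ) → ℝ)
    (i α : Fin N) (p : (Fin N → ℝ) × (Fin N → ℝ)) : ℝ :=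
  ∑ j, A i j p.1 * B j α p.2

open Matrix

lemma fderiv_eRed {N : ℕ} (A B : Fin N → Fin N → (Fin N → ℝ) → ℝ)
    (i α : Fin N) (p : (Fin N → ℝ) × (Fin N → ℝ))
    (hA : ∀ k, DifferentiableAt ℝ (A i k) p.1)
    (hB : ∀ k, DifferentiableAt ℝ (B k α) p.2)
    (w : (Fin N → ℝ) × (Fin N → ℝ)) :
    fderiv ℝ (eRed A B i α) p w
      = ∑ k, (fderiv ℝ (A i k) p.1 w.1 * B k α p.2
              + A i k p.1 * fderiv ℝ (B k α) p.2 w.2) := by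
  have hterm : ∀ k : Fin N,
      HasFDerivAt (fun q : (Fin N → ℝ) × (Fin N → ℝ) => A i k q.1 * B k α q.2)
        (A i k p.1 • ((fderiv ℝ (B k α) p.2).comp (ContinuousLinearMap.snd ℝ _ _))
          + B k α p.2 • ((fderiv ℝ (A i k) p.1).comp (ContinuousLinearMap.fst ℝ _ _))) p := by
    intro k
    have h1 : HasFDerivAt (fun q : (Fin N → ℝ) × (Fin N → ℝ) => A i k q.1)
        ((fderiv ℝ (A i k) p.1).comp (ContinuousLinearMap.fst ℝ _ _)) p :=
      ((hA k).hasFDerivAt).comp p (hasFDerivAt_fst)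
    have h2 : HasFDerivAt (fun q : (Fin N → ℝ) × (Fin N → ℝ) => B k α q.2)
        ((fderiv ℝ (B k α) p.2).comp (ContinuousLinearMap.snd ℝ _ _)) p :=
      ((hB k).hasFDerivAt).comp p (hasFDerivAt_snd)
    exact h1.mul h2
  have hsum : HasFDerivAt (eRed A B i α)
      (∑ k, (A i k p.1 • ((fderiv ℝ (B k α) p.2).comp (ContinuousLinearMap.snd ℝ _ _))
          + B k α p.2 • ((fderiv ℝ (A i k) p.1).comp (ContinuousLinearMap.fst ℝ _ _)))) p :=
    HasFDerivAt.fun_sum (fun k _ => hterm k)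
  rw [hsum.fderiv]
  simp [ContinuousLinearMap.sum_apply, mul_comm]
  ring_nf
  exact Finset.sum_congr rfl fun k _ => by ring

lemma key_sum {N : ℕ} (a a' : Fin N → ℝ) (b d : Fin N → Fin N → ℝ) :
    ∑ α, ((∑ k, a k * b k α) * (∑ l, a' l * d l α)
          - (∑ k, a' k * b k α) * (∑ l, a l * d l α))
    = ∑ k, ∑ l, a k * a' l * (∑ α, (b k α * d l α - b l α * d k α)) := by
  have h1 : ∀ α : Fin N, ((∑ k, a k * b k α) * (∑ l, a' l * d l α)
          - (∑ k, a' k * b k α) * (∑ l, a l * d l α))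
      = ∑ k, ∑ l, (a k * b k α * (a' l * d l α) - a' k * b k α * (a l * d l α)) := by
    intro α
    rw [Finset.sum_mul_sum, Finset.sum_mul_sum, ← Finset.sum_sub_distrib]
    exact Finset.sum_congr rfl fun k _ => (Finset.sum_sub_distrib _ _).symm
  simp only [h1]
  have h2 : ∑ α : Fin N, ∑ k, ∑ l, (a k * b k α * (a' l * d l α) - a' k * b k α * (a l * d l α))
      = ∑ k, ∑ l, ∑ α, (a k * b k α * (a' l * d l α) - a' k * b k α * (a l * d l α)) := by
    rw [Finset.sum_comm]
    exact Finset.sum_congr rfl fun k _ => Finset.sum_comm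
  rw [h2]
  simp only [Finset.sum_sub_distrib, mul_sub, Finset.mul_sum]
  congr 1
  · exact Finset.sum_congr rfl fun k _ => Finset.sum_congr rfl fun l _ =>
      Finset.sum_congr rfl fun α _ => by ring
  · rw [Finset.sum_comm]
    exact Finset.sum_congr rfl fun k _ => Finset.sum_congr rfl fun l _ =>
      Finset.sum_congr rfl fun α _ => by ring

lemma vec_zero_of_vecMul {N : ℕ} (M : Matrix (Fin N) (Fin N) ℝ) (hM : IsUnit M)
    (c : Fin N → ℝ) (h : ∀ α, ∑ k, c k * M k α = 0) : c = 0 := by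
  have hdet : IsUnit M.det := (Matrix.isUnit_iff_isUnit_det M).mp hM
  have h0 : Matrix.vecMul c M = 0 := by
    funext α; simpa [Matrix.vecMul, dotProduct] using h α
  have : Matrix.vecMul (Matrix.vecMul c M) M⁻¹ = c := by
    rw [Matrix.vecMul_vecMul, Matrix.mul_nonsing_inv M hdet, Matrix.vecMul_one]
  rw [h0] at this
  simpa [Matrix.zero_vecMul] using this.symm

lemma mat_zero_of_conj {N : ℕ} (M C : Matrix (Fin N) (Fin N) ℝ) (hM : IsUnit M)
    (h : M * C * Mᵀ = 0) : C = 0 := by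
  have hdet : IsUnit M.det := (Matrix.isUnit_iff_isUnit_det M).mp hM
  have hdetT : IsUnit Mᵀ.det := by rwa [Matrix.det_transpose]
  have key : M⁻¹ * (M * C * Mᵀ) * Mᵀ⁻¹ = C := by
    rw [mul_assoc M C Mᵀ, ← mul_assoc M⁻¹ M (C * Mᵀ), Matrix.nonsing_inv_mul M hdet,
      one_mul, mul_assoc, Matrix.mul_nonsing_inv _ hdetT, mul_one]
  rw [h] at key
  simpa using key.symm

/-- A reducible matrix `e_{iα}(u,v) = Σⱼ A_{ij}(u) B_{jα}(v)`, with both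
factors smooth and everywhere invertible on convex open sets `P`, `Q`, satisfies
(E1) `∂e_{jα}/∂uᵢ = ∂e_{iα}/∂uⱼ` and
(E2) `Σ_α (e_{iα} ∂e_{jβ}/∂v_α − e_{jα} ∂e_{iβ}/∂v_α) = 0`
if and only if (a) `∂A_{jk}/∂uᵢ = ∂A_{ik}/∂uⱼ` and (b) the vector fields
`Zⱼ = Σ_α B_{jα} ∂/∂v_α` pairwise commute. -/
theorem reducible_e_econd_iff
    (N : ℕ) (hN : 1 ≤ N)
    (P Q : Set (Fin N → ℝ))
    (hPopen : IsOpen P) (hPconv : Convex ℝ P) (hPne : P.Nonempty)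
    (hQopen : IsOpen Q) (hQconv : Convex ℝ Q) (hQne : Q.Nonempty)
    (A B : Fin N → Fin N → (Fin N → ℝ) → ℝ)
    (hAsmooth : ∀ i j, ContDiffOn ℝ (⊤ : ℕ∞) (A i j) P)
    (hBsmooth : ∀ j α, ContDiffOn ℝ (⊤ : ℕ∞) (B j α) Q)
    (hAinv : ∀ u ∈ P, IsUnit (Matrix.of fun i j => A i j u))
    (hBinv : ∀ v ∈ Q, IsUnit (Matrix.of fun j α => B j α v)) :
    ((∀ i j α, ∀ p ∈ P ×ˢ Q, dU2 i (eRed A B j α) p = dU2 j (eRed A B i α) p) ∧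
     (∀ i j β, ∀ p ∈ P ×ˢ Q,
        ∑ α, (eRed A B i α p * dV2 α (eRed A B j β) p -
              eRed A B j α p * dV2 α (eRed A B i β) p) = 0))
    ↔
    ((∀ i j k, ∀ u ∈ P, pderiv' i (A j k) u = pderiv' j (A i k) u) ∧
     (∀ j k β, ∀ v ∈ Q,
        ∑ α, (B j α v * pderiv' α (B k β) v - B k α v * pderiv' α (B j β) v) = 0)) := by
  -- differentiability
  have hdA : ∀ i k, ∀ u ∈ P, DifferentiableAt ℝ (A i k) u := fun i k u hu =>
    ((hAsmooth i k).contDiffAt (hPopen.mem_nhds hu)).differentiableAt (by simp)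
  have hdB : ∀ k α, ∀ v ∈ Q, DifferentiableAt ℝ (B k α) v := fun k α v hv =>
    ((hBsmooth k α).contDiffAt (hQopen.mem_nhds hv)).differentiableAt (by simp)
  -- computation of dU2
  have hdU : ∀ (i j α : Fin N), ∀ p ∈ P ×ˢ Q,
      dU2 i (eRed A B j α) p = ∑ k, pderiv' i (A j k) p.1 * B k α p.2 := by
    intro i j α p hp
    unfold dU2
    rw [fderiv_eRed A B j α p (fun k => hdA j k p.1 hp.1) (fun k => hdB k α p.2 hp.2)]
    simp [pderiv']
  -- computation of dV2
  have hdV : ∀ (α i β : Fin N), ∀ p ∈ P ×ˢ Q,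
      dV2 α (eRed A B i β) p = ∑ k, A i k p.1 * pderiv' α (B k β) p.2 := by
    intro α i β p hp
    unfold dV2
    rw [fderiv_eRed A B i β p (fun k => hdA i k p.1 hp.1) (fun k => hdB k β p.2 hp.2)]
    simp [pderiv']
  -- E2 rewriting
  have hE2eq : ∀ (i j β : Fin N), ∀ p ∈ P ×ˢ Q,
      ∑ α, (eRed A B i α p * dV2 α (eRed A B j β) p -
            eRed A B j α p * dV2 α (eRed A B i β) p)
      = ∑ k, ∑ l, A i k p.1 * A j l p.1 *
          (∑ α, (B k α p.2 * pderiv' α (B l β) p.2 - B l α p.2 * pderiv' α (B k β) p.2)) := by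
    intro i j β p hp
    have : ∀ α, eRed A B i α p * dV2 α (eRed A B j β) p -
            eRed A B j α p * dV2 α (eRed A B i β) p
        = (∑ k, A i k p.1 * B k α p.2) * (∑ l, A j l p.1 * pderiv' α (B l β) p.2)
          - (∑ k, A j k p.1 * B k α p.2) * (∑ l, A i l p.1 * pderiv' α (B l β) p.2) := by
      intro α
      rw [hdV α j β p hp, hdV α i β p hp]
      rfl
    simp only [this]
    exact key_sum (fun k => A i k p.1) (fun k => A j k p.1)
      (fun k α => B k α p.2) (fun l α => pderiv' α (B l β) p.2)
  constructor
  · rintro ⟨hE1, hE2⟩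
    constructor
    · intro i j k u hu
      obtain ⟨v, hv⟩ := hQne
      have hp : (u, v) ∈ P ×ˢ Q := ⟨hu, hv⟩
      have hc : ∀ α, ∑ m, (pderiv' i (A j m) u - pderiv' j (A i m) u) * B m α v = 0 := by
        intro α
        have h := hE1 i j α (u, v) hp
        rw [hdU i j α (u, v) hp, hdU j i α (u, v) hp] at h
        simp only [sub_mul, Finset.sum_sub_distrib]
        simpa [sub_eq_zero] using h
      have := vec_zero_of_vecMul (Matrix.of fun m α => B m α v) (hBinv v hv)
        (fun m => pderiv' i (A j m) u - pderiv' j (A i m) u) hc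
      have hk := congrFun this k
      simpa [sub_eq_zero] using hk
    · intro j k β v hv
      obtain ⟨u, hu⟩ := hPne
      have hp : (u, v) ∈ P ×ˢ Q := ⟨hu, hv⟩
      set Cm : Matrix (Fin N) (Fin N) ℝ := Matrix.of fun k l =>
        ∑ α, (B k α v * pderiv' α (B l β) v - B l α v * pderiv' α (B k β) v) with hCm
      set M : Matrix (Fin N) (Fin N) ℝ := Matrix.of fun i j => A i j u with hM
      have hconj : M * Cm * Mᵀ = 0 := by
        ext i j
        have h := hE2 i j β (u, v) hp
        rw [hE2eq i j β (u, v) hp] at h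
        have expand : (M * Cm * Mᵀ) i j = ∑ l, (∑ m, M i m * Cm m l) * M j l := by
          simp [Matrix.mul_apply, Matrix.transpose_apply]
        rw [expand]
        simp only [Matrix.zero_apply]
        rw [← h]
        rw [Finset.sum_comm]
        apply Finset.sum_congr rfl; intro m _
        rw [Finset.sum_mul]
        apply Finset.sum_congr rfl; intro l _
        simp only [hM, hCm, Matrix.of_apply]
        ring
      have hC0 := mat_zero_of_conj M Cm (hAinv u hu) hconj
      have := congrFun (congrFun hC0 j) k
      simpa [hCm] using this
  · rintro ⟨ha, hb⟩
    constructor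
    · intro i j α p hp
      rw [hdU i j α p hp, hdU j i α p hp]
      exact Finset.sum_congr rfl fun m _ => by rw [ha i j m p.1 hp.1]
    · intro i j β p hp
      rw [hE2eq i j β p hp]
      apply Finset.sum_eq_zero; intro k _
      apply Finset.sum_eq_zero; intro l _
      rw [hb k l β p.2 hp.2, mul_zero]
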